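/- Every maximal compatible family of arcs on a k-cycle contains a unique maximal arc containing all the others: fix k ≥ 2, define arcs on ℤ/kℤ and compatibility (nested or spaced) as follows: arcs are nonempty proper cyclic intervals of ℤ/kℤ, and arcs S, T are compatible if S ⊆ T, or T ⊆ S, or (S ∪ (S+1) ∪ (S−1)) ∩ T = ∅. If J is a family of pairwise compatible arcs that is maximal under inclusion, then J contains exactly one arc M of cardinality k − 1, and every arc S ∈ J satisfies S ⊆ M. -/

import Mathlib

/-- A subset of `ZMod k` is an arc if it is nonempty, proper, and a cyclic
interval `{i, i+1, …, j}`. -/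
def IsArc (k : ℕ) (S : Set (ZMod k)) : Prop :=
  S.Nonempty ∧ S ≠ Set.univ ∧
    ∃ (i : ZMod k) (t : ℕ), S = {x | ∃ m : ℕ, m ≤ t ∧ x = i + (m : ZMod k)}

/-- Two arcs are compatible if they are nested or spaced. -/
def ArcCompatible (k : ℕ) (S T : Set (ZMod k)) : Prop :=
  S ⊆ T ∨ T ⊆ S ∨
    (S ∪ ((· + 1) '' S) ∪ ((· + (-1)) '' S)) ∩ T = ∅

/-- A maximal (under inclusion) family of pairwise compatible arcs. -/
def MaxCompatFamily (k : ℕ) (J : Set (Set (ZMod k))) : Prop :=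
  (∀ S ∈ J, IsArc k S) ∧ (∀ S ∈ J, ∀ T ∈ J, ArcCompatible k S T) ∧
    ∀ J' : Set (Set (ZMod k)), (∀ S ∈ J', IsArc k S) →
      (∀ S ∈ J', ∀ T ∈ J', ArcCompatible k S T) → J ⊆ J' → J' = J

/-- Every maximal compatible family of arcs on a `k`-cycle contains a unique
maximal arc, of cardinality `k - 1`, containing all the others. -/
lemma compl_singleton_isArc (k : ℕ) (hk : 2 ≤ k) (q : ZMod k) :
    IsArc k ({q}ᶜ : Set (ZMod k)) := by
  haveI : NeZero k := ⟨by omega⟩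
  have h10 : (1 : ZMod k) ≠ 0 := by
    intro h
    have : ((1 : ℕ) : ZMod k) = 0 := by exact_mod_cast h
    have := (ZMod.natCast_eq_zero_iff 1 k).mp this
    have := Nat.le_of_dvd one_pos this
    omega
  refine ⟨⟨q + 1, by simp [add_comm]; intro h; exact h10 (by linear_combination h)⟩, ?_, q + 1, k - 2, ?_⟩
  · intro h
    have : q ∈ ({q}ᶜ : Set (ZMod k)) := h ▸ Set.mem_univ q
    exact this rfl
  · ext x
    simp only [Set.mem_compl_iff, Set.mem_singleton_iff, Set.mem_setOf_eq]
    constructor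
    · intro hx
      refine ⟨(x - (q + 1)).val, ?_, by rw [ZMod.natCast_rightInverse (x - (q+1))]; ring⟩
      have hv : (x - (q + 1)).val < k := ZMod.val_lt _
      by_contra hge
      have hval : (x - (q + 1)).val = k - 1 := by omega
      apply hx
      have h1 : ((k - 1 : ℕ) : ZMod k) = -1 := by
        have : ((k - 1 : ℕ) : ZMod k) = (k : ZMod k) - 1 := by
          push_cast [Nat.cast_sub (by omega : 1 ≤ k)]; ring
        rw [this, ZMod.natCast_self]; ring
      have h2 : x - (q + 1) = -1 := by
        rw [← ZMod.natCast_rightInverse (x - (q+1)), hval, h1]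
      linear_combination h2
    · rintro ⟨m, hm, rfl⟩ h
      have h1 : ((m + 1 : ℕ) : ZMod k) = 0 := by push_cast; linear_combination h
      have := Nat.le_of_dvd (by omega) ((ZMod.natCast_eq_zero_iff _ k).mp h1)
      omega

theorem maxCompatFamily_max_arc (k : ℕ) (hk : 2 ≤ k)
    (J : Set (Set (ZMod k))) (hJ : MaxCompatFamily k J) :
    ∃ M ∈ J, M.ncard = k - 1 ∧ (∀ S ∈ J, S ⊆ M) ∧
      ∀ M' ∈ J, M'.ncard = k - 1 → M' = M := by
  haveI : NeZero k := ⟨by omega⟩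
  obtain ⟨harc, hcompat, hmax⟩ := hJ
  -- Step 1: find a point q avoided by every member of J
  have hexq : ∃ q : ZMod k, ∀ T ∈ J, q ∉ T := by
    rcases Set.eq_empty_or_nonempty J with hJe | hne
    · exact ⟨0, by simp [hJe]⟩
    obtain ⟨S₀, hS₀J, hS₀max⟩ := Set.Finite.exists_maximalFor id J (Set.toFinite J) hne
    obtain ⟨hS₀ne, hS₀proper, i, t, hS₀eq⟩ := harc S₀ hS₀J
    refine ⟨i + ((t + 1 : ℕ) : ZMod k), ?_⟩
    have hqS₀ : i + ((t + 1 : ℕ) : ZMod k) ∉ S₀ := by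
      intro hmem
      rw [hS₀eq] at hmem
      obtain ⟨m₀, hm₀, hx⟩ := hmem
      have h1 : ((t + 1 : ℕ) : ZMod k) = (m₀ : ZMod k) := by linear_combination hx
      have h2 : (t + 1) ≡ m₀ [MOD k] := (ZMod.natCast_eq_natCast_iff _ _ _).mp h1
      have h3 : k ∣ (t + 1) - m₀ := (Nat.modEq_iff_dvd' (by omega)).mp h2.symm
      have h4 : k ≤ t + 1 - m₀ := Nat.le_of_dvd (by omega) h3
      apply hS₀proper
      rw [hS₀eq]
      ext x
      simp only [Set.mem_setOf_eq, Set.mem_univ, iff_true]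
      refine ⟨(x - i).val, by have := ZMod.val_lt (x - i); omega, ?_⟩
      rw [ZMod.natCast_rightInverse (x - i)]; ring
    intro T hTJ hqT
    rcases hcompat S₀ hS₀J T hTJ with h | h | h
    · have heq : S₀ = T := le_antisymm h (hS₀max hTJ h)
      exact hqS₀ (heq ▸ hqT)
    · exact hqS₀ (h hqT)
    · have hqmem : i + ((t + 1 : ℕ) : ZMod k) ∈ (· + 1) '' S₀ := by
        refine ⟨i + ((t : ℕ) : ZMod k), ?_, by push_cast; ring⟩
        rw [hS₀eq]; exact ⟨t, le_refl t, rfl⟩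
      have hcontra : i + ((t + 1 : ℕ) : ZMod k) ∈
          (S₀ ∪ ((· + 1) '' S₀) ∪ ((· + (-1)) '' S₀)) ∩ T :=
        ⟨Or.inl (Or.inr hqmem), hqT⟩
      rw [h] at hcontra
      exact hcontra.elim
  obtain ⟨q, hq⟩ := hexq
  set M : Set (ZMod k) := {q}ᶜ with hMdef
  have hMarc : IsArc k M := compl_singleton_isArc k hk q
  have hsub : ∀ S ∈ J, S ⊆ M := fun S hS x hx hxq => hq S hS (by rw [Set.mem_singleton_iff] at hxq; rwa [hxq] at hx)
  have hMJ : M ∈ J := by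
    have hins : insert M J = J := by
      apply hmax
      · rintro S (rfl | hS)
        · exact hMarc
        · exact harc S hS
      · rintro S (rfl | hS) T (rfl | hT)
        · exact Or.inl (le_refl _)
        · exact Or.inr (Or.inl (hsub T hT))
        · exact Or.inl (hsub S hS)
        · exact hcompat S hS T hT
      · exact Set.subset_insert _ _
    rw [← hins]; exact Set.mem_insert _ _
  have hMcard : M.ncard = k - 1 := by
    have : M = Set.univ \ {q} := by rw [hMdef, Set.compl_eq_univ_diff]
    rw [this, Set.ncard_diff (Set.singleton_subset_iff.mpr (Set.mem_univ q)),
      Set.ncard_univ, Nat.card_zmod, Set.ncard_singleton]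
  refine ⟨M, hMJ, hMcard, hsub, ?_⟩
  intro M' hM' hM'card
  exact Set.eq_of_subset_of_ncard_le (hsub M' hM') (by rw [hM'card, hMcard]) (Set.toFinite M)
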